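/- Let r ≥ 1 and let G be a finite simple graph containing 4r pairwise vertex-disjoint triangles T_1, …, T_{4r} such that for each i: every vertex x of T_i has exactly one neighbour outside T_i, this outside neighbour has degree exactly 2 in G, and the three outside neighbours of the three vertices of T_i are pairwise distinct. Then G contains r pairwise vertex-disjoint subgraphs, each isomorphic to the net N_{1,1,1}. -/
import Mathlib


/-- The net `N_{1,1,1}`: a triangle on vertices `0, 1, 2` together with the
pendant edges `0-3`, `1-4`, `2-5`. -/
def Net : SimpleGraph (Fin 6) :=
  SimpleGraph.fromRel (fun a b =>
    (a = 0 ∧ b = 1) ∨ (a = 0 ∧ b = 2) ∨ (a = 1 ∧ b = 2) ∨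
    (a = 0 ∧ b = 3) ∨ (a = 1 ∧ b = 4) ∨ (a = 2 ∧ b = 5))

instance : DecidableRel Net.Adj := fun a b =>
  decidable_of_iff _ (SimpleGraph.fromRel_adj _ a b).symm

/-- A vertex of degree `2` cannot have three pairwise distinct neighbours. -/
lemma three_nbrs {V : Type*} [Fintype V] {G : SimpleGraph V} {v x y z : V}
    (hdeg : (G.neighborSet v).ncard = 2)
    (hx : G.Adj v x) (hy : G.Adj v y) (hz : G.Adj v z)
    (hxy : x ≠ y) (hxz : x ≠ z) (hyz : y ≠ z) : False := by
  have hsub : ({x, y, z} : Set V) ⊆ G.neighborSet v := by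
    intro w hw
    simp only [Set.mem_insert_iff, Set.mem_singleton_iff] at hw
    rcases hw with rfl | rfl | rfl <;> assumption
  have h3 : ({x, y, z} : Set V).ncard = 3 :=
    Set.ncard_eq_three.mpr ⟨x, y, z, hxy, hxz, hyz, rfl⟩
  have := Set.ncard_le_ncard hsub (Set.toFinite _)
  omega

/-- Greedy independent-set lemma: in a symmetric conflict relation where each
element conflicts with at most `3` others, any set of size at least `4k`
contains a conflict-free subset of size `k`. -/
lemma greedy {α : Type*} [Fintype α] [DecidableEq α] (C : α → α → Prop)
    [DecidableRel C] (hsymm : ∀ x y, C x y → C y x)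
    (hdeg : ∀ x, (Finset.univ.filter (C x)).card ≤ 3) :
    ∀ (k : ℕ) (s : Finset α), 4 * k ≤ s.card →
      ∃ t ⊆ s, t.card = k ∧ ∀ x ∈ t, ∀ y ∈ t, x ≠ y → ¬ C x y := by
  intro k
  induction k with
  | zero => intro s _; exact ⟨∅, by simp⟩
  | succ k ih =>
    intro s hcard
    have hne : s.Nonempty := by rw [← Finset.card_pos]; omega
    obtain ⟨x, hx⟩ := hne
    set bad : Finset α := insert x (Finset.univ.filter (C x)) with hbad
    have hbadcard : bad.card ≤ 4 := by
      calc bad.card ≤ (Finset.univ.filter (C x)).card + 1 := Finset.card_insert_le _ _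
        _ ≤ 4 := by have := hdeg x; omega
    have hs'card : 4 * k ≤ (s \ bad).card := by
      have h1 := Finset.le_card_sdiff bad s
      omega
    obtain ⟨t', ht'sub, ht'card, ht'free⟩ := ih (s \ bad) hs'card
    have hxnot : x ∉ t' := fun h => by
      have := ht'sub h
      simp [hbad] at this
    refine ⟨insert x t', ?_, ?_, ?_⟩
    · intro y hy
      rcases Finset.mem_insert.mp hy with rfl | hy
      · exact hx
      · exact (Finset.sdiff_subset) (ht'sub hy)
    · rw [Finset.card_insert_of_notMem hxnot, ht'card]
    · intro a ha b hb hab hCab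
      rcases Finset.mem_insert.mp ha with ha' | ha' <;>
        rcases Finset.mem_insert.mp hb with hb' | hb'
      · exact hab (ha'.trans hb'.symm)
      · subst ha'
        have := ht'sub hb'
        rw [Finset.mem_sdiff] at this
        exact this.2 (by simp [hbad, hCab])
      · subst hb'
        have := ht'sub ha'
        rw [Finset.mem_sdiff] at this
        exact this.2 (by simp [hbad, hsymm _ _ hCab])
      · exact ht'free a ha' b hb' hab hCab

/-- Let `G` contain `4r` pairwise vertex-disjoint triangles `T i` such that
every vertex `T i a` of the `i`-th triangle has exactly one neighbour
`n i a` outside the triangle, this outside neighbour has degree exactly `2` in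
`G`, and the three outside neighbours of a triangle are pairwise distinct.
Then `G` contains `r` pairwise vertex-disjoint subgraphs, each isomorphic to
the net `N_{1,1,1}`. -/
theorem stmt14 {V : Type*} [Fintype V] (G : SimpleGraph V) (r : ℕ) (hr : 1 ≤ r)
    (T : Fin (4 * r) → Fin 3 → V) (n : Fin (4 * r) → Fin 3 → V)
    (hTinj : ∀ i, Function.Injective (T i))
    (hTdisj : ∀ i j, i ≠ j → Disjoint (Set.range (T i)) (Set.range (T j)))
    (hTtri : ∀ i, ∀ a b : Fin 3, a ≠ b → G.Adj (T i a) (T i b))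
    (hnout : ∀ i a, n i a ∉ Set.range (T i))
    (hnadj : ∀ i a, G.Adj (T i a) (n i a))
    (hnuniq : ∀ i a, ∀ w : V, G.Adj (T i a) w → w ∉ Set.range (T i) → w = n i a)
    (hndeg : ∀ i a, (G.neighborSet (n i a)).ncard = 2)
    (hninj : ∀ i, Function.Injective (n i)) :
    ∃ f : Fin r → Fin 6 → V,
      (∀ i, Function.Injective (f i) ∧
        ∀ a b : Fin 6, Net.Adj a b → G.Adj (f i a) (f i b)) ∧
      ∀ i j, i ≠ j → Disjoint (Set.range (f i)) (Set.range (f j)) := by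
  classical
  -- pendant vertices lie outside every triangle
  have claim1 : ∀ i a j b, n i a ≠ T j b := by
    intro i a j b h
    by_cases hij : j = i
    · subst hij
      exact hnout j a ⟨b, h.symm⟩
    · have h1 : G.Adj (n i a) (T i a) := (hnadj i a).symm
      have h2 : G.Adj (n i a) (T j (b + 1)) := by
        rw [h]; exact hTtri j b (b + 1) (by fin_cases b <;> decide)
      have h3 : G.Adj (n i a) (T j (b + 2)) := by
        rw [h]; exact hTtri j b (b + 2) (by fin_cases b <;> decide)
      have d12 : T i a ≠ T j (b + 1) := fun he =>
        (hTdisj i j (Ne.symm hij)).ne_of_mem ⟨a, rfl⟩ ⟨b + 1, rfl⟩ he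
      have d13 : T i a ≠ T j (b + 2) := fun he =>
        (hTdisj i j (Ne.symm hij)).ne_of_mem ⟨a, rfl⟩ ⟨b + 2, rfl⟩ he
      have hb12 : (b + 1 : Fin 3) ≠ b + 2 := by fin_cases b <;> decide
      have d23 : T j (b + 1) ≠ T j (b + 2) := fun he => hb12 (hTinj j he)
      exact three_nbrs (hndeg i a) h1 h2 h3 d12 d13 d23
  -- two pendants from different triangles coincide only in a "conflict"
  set C : Fin (4 * r) → Fin (4 * r) → Prop :=
    fun i j => i ≠ j ∧ ∃ a b : Fin 3, n i a = n j b with hC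
  have hsymm : ∀ i j, C i j → C j i := by
    rintro i j ⟨hne, a, b, h⟩
    exact ⟨hne.symm, b, a, h.symm⟩
  -- a shared pendant forces three distinct neighbours unless triangles coincide
  have claim2 : ∀ i a j b k c, i ≠ j → i ≠ k → j ≠ k →
      n i a = n j b → n i a = n k c → False := by
    intro i a j b k c hij hik hjk h1 h2
    have a1 : G.Adj (n i a) (T i a) := (hnadj i a).symm
    have a2 : G.Adj (n i a) (T j b) := by rw [h1]; exact (hnadj j b).symm
    have a3 : G.Adj (n i a) (T k c) := by rw [h2]; exact (hnadj k c).symm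
    have d12 : T i a ≠ T j b := fun he =>
      (hTdisj i j hij).ne_of_mem ⟨a, rfl⟩ ⟨b, rfl⟩ he
    have d13 : T i a ≠ T k c := fun he =>
      (hTdisj i k hik).ne_of_mem ⟨a, rfl⟩ ⟨c, rfl⟩ he
    have d23 : T j b ≠ T k c := fun he =>
      (hTdisj j k hjk).ne_of_mem ⟨b, rfl⟩ ⟨c, rfl⟩ he
    exact three_nbrs (hndeg i a) a1 a2 a3 d12 d13 d23
  -- each triangle conflicts with at most 3 others
  have hdeg3 : ∀ i, (Finset.univ.filter (C i)).card ≤ 3 := by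
    intro i
    have : (Finset.univ.filter (C i)).card ≤ (Finset.univ : Finset (Fin 3)).card := by
      apply Finset.card_le_card_of_injOn
        (fun j => if h : ∃ a b : Fin 3, n i a = n j b then h.choose else 0)
      · intro j _; exact Finset.mem_univ _
      · intro j1 hj1 j2 hj2 he
        simp only [Finset.coe_filter, Set.mem_setOf_eq, Finset.mem_univ, true_and] at hj1 hj2
        obtain ⟨hne1, hex1⟩ := hj1
        obtain ⟨hne2, hex2⟩ := hj2
        have he' : hex1.choose = hex2.choose := by
          simpa [dif_pos hex1, dif_pos hex2] using he
        obtain ⟨b1, hb1⟩ := hex1.choose_spec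
        obtain ⟨b2, hb2⟩ := hex2.choose_spec
        rw [he'] at hb1
        by_contra hj
        exact claim2 i hex2.choose j1 b1 j2 b2 hne1 hne2 hj hb1 hb2
    simpa using this
  -- select r pairwise non-conflicting triangles
  obtain ⟨t, -, htcard, htfree⟩ := greedy C hsymm hdeg3 r Finset.univ
    (by simp [Finset.card_univ])
  -- enumerate the chosen triangles
  have e : Fin r ≃ {x // x ∈ t} := (Fin.castOrderIso htcard.symm).toEquiv.trans t.equivFin.symm
  set σ : Fin r → Fin (4 * r) := fun i => (e i : Fin (4 * r)) with hσ
  have σinj : Function.Injective σ := fun i j h =>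
    e.injective (Subtype.ext h)
  have σmem : ∀ i, σ i ∈ t := fun i => (e i).2
  -- build the nets
  refine ⟨fun i => ![T (σ i) 0, T (σ i) 1, T (σ i) 2, n (σ i) 0, n (σ i) 1, n (σ i) 2],
    fun i => ⟨?_, ?_⟩, ?_⟩
  · -- injectivity
    have hTT : ∀ a b : Fin 3, a ≠ b → T (σ i) a ≠ T (σ i) b :=
      fun a b hab h => hab (hTinj (σ i) h)
    have hnn : ∀ a b : Fin 3, a ≠ b → n (σ i) a ≠ n (σ i) b :=
      fun a b hab h => hab (hninj (σ i) h)
    have hnT : ∀ a b : Fin 3, n (σ i) a ≠ T (σ i) b := fun a b => claim1 _ a _ b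
    intro a b h
    fin_cases a <;> fin_cases b <;>
      first
      | rfl
      | (simp at h
         first
          | exact absurd h (hTT _ _ (by decide))
          | exact absurd h (hnn _ _ (by decide))
          | exact absurd h (hnT _ _)
          | exact absurd h.symm (hnT _ _))
  · -- adjacency
    intro a b hab
    fin_cases a <;> fin_cases b <;>
      first
      | exact absurd hab (by decide)
      | (simp only [Matrix.cons_val', Matrix.cons_val_zero, Matrix.cons_val_one,
          Matrix.head_cons, Matrix.cons_val_two, Matrix.tail_cons,
          Matrix.cons_val_three, Matrix.cons_val_four, Matrix.cons_val_succ,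
          Matrix.head_fin_const, Matrix.cons_val_fin_one, Fin.isValue]
         first
          | exact hTtri _ _ _ (by decide)
          | exact hnadj _ _
          | exact (hnadj _ _).symm)
  · -- disjointness
    intro i j hij
    have hσne : σ i ≠ σ j := fun h => hij (σinj h)
    have hTT : ∀ a b : Fin 3, T (σ i) a ≠ T (σ j) b := fun a b h =>
      (hTdisj _ _ hσne).ne_of_mem ⟨a, rfl⟩ ⟨b, rfl⟩ h
    have hnn : ∀ a b : Fin 3, n (σ i) a ≠ n (σ j) b := by
      intro a b h
      exact htfree _ (σmem i) _ (σmem j) hσne ⟨hσne, a, b, h⟩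
    rw [Set.disjoint_left]
    rintro x ⟨a, rfl⟩ ⟨b, hb⟩
    fin_cases a <;> fin_cases b <;>
      (simp at hb
       first
        | exact hTT _ _ hb.symm
        | exact claim1 _ _ _ _ hb
        | exact claim1 _ _ _ _ hb.symm
        | exact hnn _ _ hb.symm)
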